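/- Let ν be a Borel probability measure on [0,1] and let (X_i)_{i≥1} be i.i.d. random variables with law ν; write X̄_m = (X₁+⋯+X_m)/m. Assume ∫₀¹ x/(1−x) dν(x) < ∞ and ∫₀¹ x dν(x) < 1/2. Then there exists m* ∈ ℕ, m* ≥ 1, such that E[X̄_{m*}/(1−X̄_{m*})] < 1. (In terms of the condensation criterion, the Bianconi–Barabási model BB(m*) with fitness law ν^{(m*)} condensates.) -/

import Mathlib

open MeasureTheory ProbabilityTheory Filter
open scoped ENNReal
open scoped Topology

/-- The "condensation integral" `E[X̄_m / (1 - X̄_m)]`, computed in `[0,∞]`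
(with the convention `x/(1-x) = ∞` when `x = 1`, realised via `ℝ≥0∞` division),
where `X̄_m = (X₁ + ⋯ + X_m)/m`. -/
noncomputable def meanRatioInt {Ω : Type*} [MeasurableSpace Ω] (μ : Measure Ω)
    (X : ℕ → Ω → ℝ) (m : ℕ) : ℝ≥0∞ :=
  ∫⁻ ω, ENNReal.ofReal ((∑ i ∈ Finset.range m, X i ω) / m) /
    ENNReal.ofReal (1 - (∑ i ∈ Finset.range m, X i ω) / m) ∂μ


noncomputable def gE (x : ℝ) : ℝ≥0∞ := ENNReal.ofReal x / ENNReal.ofReal (1 - x)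

lemma gE_mono : Monotone gE := by
  intro x y hxy
  exact ENNReal.div_le_div (ENNReal.ofReal_le_ofReal hxy)
    (ENNReal.ofReal_le_ofReal (by linarith))

lemma gE_measurable : Measurable gE :=
  (ENNReal.measurable_ofReal.comp measurable_id).div
    (ENNReal.measurable_ofReal.comp (measurable_const.sub measurable_id))

lemma convexOn_ratio : ConvexOn ℝ (Set.Ico (0:ℝ) 1) (fun x => x / (1 - x)) := by
  refine ⟨convex_Ico 0 1, ?_⟩
  intro x hx y hy a b ha hb hab
  have hx1 : (0:ℝ) < 1 - x := by linarith [hx.2]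
  have hy1 : (0:ℝ) < 1 - y := by linarith [hy.2]
  have hz1 : (0:ℝ) < 1 - (a * x + b * y) := by
    have h1 : min (1-x) (1-y) ≤ a * (1-x) + b * (1-y) := by
      calc min (1-x) (1-y) = (a+b) * min (1-x) (1-y) := by rw [hab]; ring
      _ ≤ a * (1-x) + b * (1-y) := by
          have := mul_le_mul_of_nonneg_left (min_le_left (1-x) (1-y)) ha
          have := mul_le_mul_of_nonneg_left (min_le_right (1-x) (1-y)) hb
          linarith
    have h2 : (0:ℝ) < min (1-x) (1-y) := lt_min hx1 hy1
    nlinarith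
  simp only [smul_eq_mul]
  rw [mul_div_assoc' a, mul_div_assoc' b, div_add_div _ _ hx1.ne' hy1.ne',
    div_le_div_iff₀ hz1 (mul_pos hx1 hy1)]
  have hb' : b = 1 - a := by linarith
  subst hb'
  nlinarith [mul_nonneg (mul_nonneg ha hb) (sq_nonneg (x - y))]

lemma gE_jensen (m : ℕ) (hm : 1 ≤ m) (x : ℕ → ℝ)
    (hx : ∀ i ∈ Finset.range m, x i ∈ Set.Icc (0:ℝ) 1) :
    gE ((∑ i ∈ Finset.range m, x i) / m) ≤ (∑ i ∈ Finset.range m, gE (x i)) / m := by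
  by_cases h : ∀ i ∈ Finset.range m, x i < 1
  · -- all strictly below 1
    have hm0 : (0:ℝ) < m := by exact_mod_cast hm
    have hA1 : (∑ i ∈ Finset.range m, x i) / m < 1 := by
      rw [div_lt_one hm0]
      calc (∑ i ∈ Finset.range m, x i) < ∑ _i ∈ Finset.range m, (1:ℝ) :=
        Finset.sum_lt_sum_of_nonempty (Finset.nonempty_range_iff.mpr (by omega)) h
      _ = m := by simp
    have hA0 : 0 ≤ (∑ i ∈ Finset.range m, x i) / m :=
      div_nonneg (Finset.sum_nonneg fun i hi => (hx i hi).1) hm0.le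
    have hJ : ((∑ i ∈ Finset.range m, x i) / m) / (1 - (∑ i ∈ Finset.range m, x i) / m)
        ≤ ∑ i ∈ Finset.range m, (x i / (1 - x i)) / m := by
      have key := convexOn_ratio.map_sum_le (t := Finset.range m) (w := fun _ => (m:ℝ)⁻¹)
        (p := x) (fun i _ => by positivity)
        (by simp [Finset.sum_const, mul_inv_cancel₀ hm0.ne'])
        (fun i hi => ⟨(hx i hi).1, h i hi⟩)
      have h1 : ∑ i ∈ Finset.range m, (m:ℝ)⁻¹ • x i = (∑ i ∈ Finset.range m, x i) / m := by
        rw [Finset.sum_div]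
        exact Finset.sum_congr rfl fun i _ => by rw [smul_eq_mul, div_eq_inv_mul]
      rw [h1] at key
      simpa [smul_eq_mul, div_eq_inv_mul] using key
    calc gE ((∑ i ∈ Finset.range m, x i) / m)
        = ENNReal.ofReal (((∑ i ∈ Finset.range m, x i) / m) /
            (1 - (∑ i ∈ Finset.range m, x i) / m)) := by
          rw [gE, ENNReal.ofReal_div_of_pos
            (y := 1 - (∑ i ∈ Finset.range m, x i) / m) (by linarith)]
      _ ≤ ENNReal.ofReal (∑ i ∈ Finset.range m, (x i / (1 - x i)) / m) :=
          ENNReal.ofReal_le_ofReal hJ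
      _ = ∑ i ∈ Finset.range m, ENNReal.ofReal ((x i / (1 - x i)) / m) :=
          ENNReal.ofReal_sum_of_nonneg fun i hi => by
            have h1 : 0 < 1 - x i := by linarith [h i hi]
            have := (hx i hi).1
            positivity
      _ = ∑ i ∈ Finset.range m, gE (x i) / m := by
          refine Finset.sum_congr rfl fun i hi => ?_
          have h1 : 0 < 1 - x i := by linarith [h i hi]
          rw [ENNReal.ofReal_div_of_pos hm0, ENNReal.ofReal_div_of_pos h1,
            ENNReal.ofReal_natCast, gE]
      _ = (∑ i ∈ Finset.range m, gE (x i)) / m := by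
          simp [div_eq_mul_inv, Finset.sum_mul]
  · push_neg at h
    obtain ⟨j, hj, hj1⟩ := h
    have hxj : x j = 1 := le_antisymm (hx j hj).2 hj1
    have hgj : gE (x j) = ⊤ := by
      rw [gE, hxj]
      simp
    have hsum : (∑ i ∈ Finset.range m, gE (x i)) = ⊤ :=
      ENNReal.sum_eq_top.mpr ⟨j, hj, hgj⟩
    rw [hsum, ENNReal.top_div_of_ne_top (by simp)]
    exact le_top


set_option maxHeartbeats 1000000

/-- If `∫₀¹ x/(1-x) dν(x) < ∞` and `∫₀¹ x dν(x) < 1/2`, then there exists `m* ≥ 1`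
with `E[X̄_{m*}/(1-X̄_{m*})] < 1`, i.e. the Bianconi–Barabási model `BB(m*)` with
fitness law `ν^{(m*)}` condensates. -/
theorem exists_condensing_convolution
    {Ω : Type*} [MeasurableSpace Ω] (μ : Measure Ω) [IsProbabilityMeasure μ]
    (ν : Measure ℝ) [IsProbabilityMeasure ν]
    (X : ℕ → Ω → ℝ) (hmeas : ∀ i, Measurable (X i))
    (hindep : iIndepFun X μ)
    (hlaw : ∀ i, μ.map (X i) = ν)
    (hsupp : ν (Set.Icc (0:ℝ) 1)ᶜ = 0)
    (hint : (∫⁻ x, ENNReal.ofReal x / ENNReal.ofReal (1 - x) ∂ν) < ⊤)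
    (hmean : (∫ x, x ∂ν) < 1 / 2) :
    ∃ m : ℕ, 1 ≤ m ∧ meanRatioInt μ X m < 1 := by
  -- basic a.e. support facts
  have hGood : ∀ᵐ ω ∂μ, ∀ i, X i ω ∈ Set.Icc (0:ℝ) 1 := by
    rw [ae_all_iff]
    intro i
    have : μ (X i ⁻¹' (Set.Icc (0:ℝ) 1)ᶜ) = 0 := by
      rw [← Measure.map_apply (hmeas i) (measurableSet_Icc.compl), hlaw i]
      exact hsupp
    exact this
  -- the mean
  set m0 : ℝ := ∫ x, x ∂ν with hm0def
  have hm00 : 0 ≤ m0 := by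
    refine integral_nonneg_of_ae ?_
    have h : ∀ᵐ x ∂ν, x ∈ Set.Icc (0:ℝ) 1 := by
      rw [ae_iff]; exact hsupp
    exact h.mono fun x hx => hx.1
  clear_value m0
  set t : ℝ := m0 / 2 + 1 / 4 with htdef
  have hmt : m0 < t := by rw [htdef]; linarith
  have ht2 : t < 1/2 := by rw [htdef]; linarith
  have ht0 : 0 ≤ t := by rw [htdef]; linarith
  clear_value t
  set c : ℝ := t - m0 with hcdef
  have hc0 : 0 < c := by rw [hcdef]; linarith
  clear_value c
  have htt : t / (1 - t) < 1 := by
    rw [div_lt_one (by linarith)]; linarith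
  have htt0 : 0 ≤ t / (1 - t) := div_nonneg ht0 (by linarith)
  set ε : ℝ := (1 - t / (1 - t)) / 2 with hεdef
  have hε0 : 0 < ε := by rw [hεdef]; linarith
  clear_value ε
  have hlt1 : t / (1 - t) + ε < 1 := by rw [hεdef]; linarith
  -- moments of the X i
  have hbd : ∀ i, ∀ᵐ ω ∂μ, ‖X i ω‖ ≤ 1 := fun i =>
    hGood.mono fun ω hω => by
      rw [Real.norm_eq_abs, abs_le]; exact ⟨by linarith [(hω i).1], (hω i).2⟩
  have hXm : ∀ i, MemLp (X i) 2 μ := fun i =>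
    MemLp.of_bound (hmeas i).aestronglyMeasurable 1 (hbd i)
  have hXint : ∀ i, Integrable (X i) μ := fun i => (hXm i).integrable one_le_two
  have hEX : ∀ i, ∫ ω, X i ω ∂μ = m0 := by
    intro i
    rw [hm0def, ← hlaw i]
    exact (integral_map (hmeas i).aemeasurable aestronglyMeasurable_id).symm
  have hVar : ∀ i, variance (X i) μ ≤ 1 := by
    intro i
    refine (variance_le_expectation_sq (hmeas i).aestronglyMeasurable).trans ?_
    have h1 : ∫ ω, (X i ω) ^ 2 ∂μ ≤ ∫ _ω, (1:ℝ) ∂μ := by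
      refine integral_mono_ae (hXm i).integrable_sq (integrable_const 1) ?_
      refine (hbd i).mono fun ω hω => ?_
      have h := abs_le.mp (by rwa [Real.norm_eq_abs] at hω)
      show X i ω ^ 2 ≤ 1
      nlinarith [h.1, h.2]
    simpa using h1
  -- finiteness of the ν-integral of gE
  have hgν : (∫⁻ x, gE x ∂ν) ≠ ⊤ := hint.ne
  -- choice of η
  have hν1 : ν {(1:ℝ)} = 0 := by
    have hae : ∀ᵐ x ∂ν, gE x < ⊤ := ae_lt_top gE_measurable hgν
    have hsub : {(1:ℝ)} ⊆ {x : ℝ | ¬ gE x < ⊤} := by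
      intro x hx
      rw [Set.mem_singleton_iff] at hx
      subst hx
      simp [gE]
    exact measure_mono_null hsub (ae_iff.mp hae)
  have hIci : ν (Set.Ici (1:ℝ)) = 0 := by
    have h1 : Set.Ici (1:ℝ) = {(1:ℝ)} ∪ Set.Ioi 1 := by
      ext x; simp [le_iff_lt_or_eq, or_comm, eq_comm]
    have h2 : ν (Set.Ioi (1:ℝ)) = 0 :=
      measure_mono_null (fun x (hx : 1 < x) => by
        simp only [Set.mem_compl_iff, Set.mem_Icc, not_and_or, not_le]
        right; exact hx) hsupp
    rw [h1]
    exact le_antisymm ((measure_union_le _ _).trans (by rw [hν1, h2]; simp)) zero_le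
  obtain ⟨δν, hδν0, hδν⟩ := exists_pos_setLIntegral_lt_of_measure_lt hgν
    (ε := ENNReal.ofReal (ε/2)) (by simp [ENNReal.ofReal_eq_zero]; linarith)
  have htail : Tendsto (fun n : ℕ => ν (Set.Ioi (1 - 1/(n+1) : ℝ))) atTop (𝓝 0) := by
    have h1 : (⋂ n : ℕ, Set.Ioi (1 - 1/(n+1) : ℝ)) = Set.Ici 1 := by
      ext x
      simp only [Set.mem_iInter, Set.mem_Ioi, Set.mem_Ici]
      constructor
      · intro h
        by_contra hx
        push_neg at hx
        obtain ⟨n, hn⟩ := exists_nat_gt (1/(1-x))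
        have hx1 : 0 < 1 - x := by linarith
        have hn1 : 1/(1-x) < (n:ℝ)+1 := by push_cast; linarith
        have := h n
        have : 1/((n:ℝ)+1) < 1 - x := by
          rw [div_lt_iff₀ (by positivity)]
          rw [div_lt_iff₀ hx1] at hn1
          linarith
        linarith [h n]
      · intro h n
        have : (0:ℝ) < 1/(n+1) := by positivity
        linarith
    have := tendsto_measure_iInter_atTop (μ := ν)
      (s := fun n : ℕ => Set.Ioi (1 - 1/(n+1) : ℝ))
      (fun n => measurableSet_Ioi.nullMeasurableSet)
      (fun n m hnm => by
        apply Set.Ioi_subset_Ioi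
        have h1 : (n:ℝ)+1 ≤ (m:ℝ)+1 := by have := (Nat.cast_le (α := ℝ)).mpr hnm; linarith
        have := one_div_le_one_div_of_le (by positivity : (0:ℝ) < (n:ℝ)+1) h1
        linarith)
      ⟨0, measure_ne_top _ _⟩
    rw [h1, hIci] at this
    exact this
  obtain ⟨n₀, hn₀⟩ := (htail.eventually_lt_const hδν0).exists
  set η : ℝ := 1/(n₀+1) with hηdef
  have hη0 : 0 < η := by positivity
  have hη : (∫⁻ x in Set.Ioi (1-η), gE x ∂ν) < ENNReal.ofReal (ε/2) := hδν _ hn₀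
  clear_value η
  set K : ℝ≥0∞ := ENNReal.ofReal (1-η) / ENNReal.ofReal η with hKdef
  have hK : K ≠ ⊤ :=
    (ENNReal.div_lt_top ENNReal.ofReal_ne_top (ENNReal.ofReal_pos.mpr hη0).ne').ne
  have hgK : ∀ x : ℝ, x ≤ 1 - η → gE x ≤ K := fun x hx =>
    ENNReal.div_le_div (ENNReal.ofReal_le_ofReal hx)
      (ENNReal.ofReal_le_ofReal (by linarith))
  clear_value K
  -- choice of m
  set δ' : ℝ≥0∞ := ENNReal.ofReal (ε/2) / (K + 1) with hδ'def
  have hδ'0 : δ' ≠ 0 := by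
    rw [hδ'def]
    simp only [ne_eq, ENNReal.div_eq_zero_iff]
    push_neg
    constructor
    · simp [ENNReal.ofReal_eq_zero]; linarith
    · exact (ENNReal.add_lt_top.mpr ⟨hK.lt_top, ENNReal.one_lt_top⟩).ne
  have hδ'top : δ' ≠ ⊤ := by
    rw [hδ'def]
    exact (ENNReal.div_lt_top ENNReal.ofReal_ne_top (by simp)).ne
  have hδ'r : 0 < δ'.toReal := ENNReal.toReal_pos hδ'0 hδ'top
  clear_value δ'
  obtain ⟨N, hN⟩ := exists_nat_gt (1/(c^2 * δ'.toReal))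
  set m : ℕ := max 1 N with hmdef
  have hm1 : 1 ≤ m := le_max_left _ _
  have hNm : (N:ℝ) ≤ m := by exact_mod_cast le_max_right 1 N
  clear_value m
  have hmR : (0:ℝ) < m := by exact_mod_cast hm1
  have hmc : 1/(m * c^2) < δ'.toReal := by
    have h2 : 1/(c^2 * δ'.toReal) < (m:ℝ) := lt_of_lt_of_le hN hNm
    rw [div_lt_iff₀ (by positivity)] at h2 ⊢
    nlinarith
  refine ⟨m, hm1, ?_⟩
  -- the empirical mean
  set A : Ω → ℝ := fun ω => (∑ i ∈ Finset.range m, X i ω) / m with hAdef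
  have hAmeas : Measurable A :=
    (Finset.measurable_sum _ fun i _ => hmeas i).div_const _
  set E : Set Ω := {ω | A ω ≤ t} with hEdef
  have hE : MeasurableSet E := measurableSet_le hAmeas measurable_const
  have hEc : Eᶜ = {ω | t < A ω} := by
    ext ω; simp [hEdef, not_le]
  -- Chebyshev's inequality
  set S : Ω → ℝ := fun ω => ∑ i ∈ Finset.range m, X i ω with hSdef
  have hSsum : S = ∑ i ∈ Finset.range m, X i := by
    ext ω; simp [hSdef, Finset.sum_apply]
  have hS2 : MemLp S 2 μ := by
    rw [hSsum]; exact memLp_finset_sum' _ fun i _ => hXm i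
  have hES : ∫ ω, S ω ∂μ = m * m0 := by
    rw [hSdef]
    rw [integral_finset_sum _ fun i _ => hXint i]
    simp [hEX, Finset.sum_const, nsmul_eq_mul]
  have hVarS : variance S μ ≤ m := by
    rw [hSsum, IndepFun.variance_sum (fun i _ => hXm i)
      (fun i _ j _ hij => hindep.indepFun hij)]
    calc ∑ i ∈ Finset.range m, variance (X i) μ ≤ ∑ _i ∈ Finset.range m, (1:ℝ) :=
      Finset.sum_le_sum fun i _ => hVar i
    _ = m := by simp
  have hbadsub : {ω | t < A ω} ⊆ {ω | (m:ℝ)*c ≤ |S ω - ∫ ω, S ω ∂μ|} := by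
      intro ω hω
      simp only [Set.mem_setOf_eq] at hω ⊢
      rw [hES]
      have h1 : (m:ℝ)*t < S ω := by
        have h : t < (∑ i ∈ Finset.range m, X i ω) / m := hω
        have h2 := (lt_div_iff₀ hmR).mp h
        show (m:ℝ)*t < ∑ i ∈ Finset.range m, X i ω
        linarith
      have h2 : (m:ℝ)*c ≤ S ω - m*m0 := by rw [hcdef]; nlinarith
      exact le_trans h2 (le_abs_self _)
  obtain ⟨ES, hES'⟩ : ∃ v, ∫ ω, S ω ∂μ = v := ⟨_, rfl⟩
  rw [hES'] at hbadsub
  obtain ⟨VS, hVS'⟩ : ∃ v, variance S μ = v := ⟨_, rfl⟩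
  rw [hVS'] at hVarS
  clear_value S
  have hcheb : μ Eᶜ ≤ δ' := by
    rw [hEc]
    refine le_trans (measure_mono hbadsub) ?_
    rw [← hES']
    refine le_trans (meas_ge_le_variance_div_sq hS2 (by positivity : (0:ℝ) < m*c)) ?_
    rw [hVS']
    have h1 : VS / ((m:ℝ)*c)^2 ≤ 1/(m*c^2) := by
      rw [div_le_div_iff₀ (by positivity) (by positivity)]
      nlinarith [mul_le_mul_of_nonneg_right hVarS (show (0:ℝ) ≤ (m:ℝ)*c^2 by positivity)]
    calc ENNReal.ofReal (VS / ((m:ℝ)*c)^2)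
        ≤ ENNReal.ofReal (1/(m*c^2)) := ENNReal.ofReal_le_ofReal h1
      _ ≤ ENNReal.ofReal δ'.toReal := ENNReal.ofReal_le_ofReal hmc.le
      _ = δ' := ENNReal.ofReal_toReal hδ'top
  -- bound on E
  have h₁ : ∫⁻ ω in E, gE (A ω) ∂μ ≤ ENNReal.ofReal (t/(1-t)) := by
    calc ∫⁻ ω in E, gE (A ω) ∂μ
        ≤ ∫⁻ _ω in E, ENNReal.ofReal (t/(1-t)) ∂μ := by
          refine setLIntegral_mono measurable_const fun ω hω => ?_
          refine le_trans (gE_mono (hω : A ω ≤ t)) ?_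
          rw [ENNReal.ofReal_div_of_pos (by linarith : (0:ℝ) < 1 - t)]
          exact le_rfl
      _ = ENNReal.ofReal (t/(1-t)) * μ E := setLIntegral_const _ _
      _ ≤ ENNReal.ofReal (t/(1-t)) * 1 := mul_le_mul_right prob_le_one _
      _ = ENNReal.ofReal (t/(1-t)) := mul_one _
  -- bound on Eᶜ, per coordinate
  have hI : ∀ i, ∫⁻ ω in Eᶜ, gE (X i ω) ∂μ ≤ ENNReal.ofReal ε := by
    intro i
    set P : Set Ω := X i ⁻¹' (Set.Ioi (1-η)) with hPdef
    have hPmeas : MeasurableSet P := (hmeas i) measurableSet_Ioi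
    have hsub : Eᶜ ⊆ P ∪ (Eᶜ ∩ Pᶜ) := by
      intro ω hω
      by_cases h : ω ∈ P
      · exact Or.inl h
      · exact Or.inr ⟨hω, h⟩
    calc ∫⁻ ω in Eᶜ, gE (X i ω) ∂μ
        ≤ ∫⁻ ω in P ∪ (Eᶜ ∩ Pᶜ), gE (X i ω) ∂μ := lintegral_mono_set hsub
      _ ≤ (∫⁻ ω in P, gE (X i ω) ∂μ) + ∫⁻ ω in Eᶜ ∩ Pᶜ, gE (X i ω) ∂μ :=
          lintegral_union_le _ _ _
      _ ≤ ENNReal.ofReal (ε/2) + ENNReal.ofReal (ε/2) := by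
          refine add_le_add ?_ ?_
          · have heq : ∫⁻ ω in P, gE (X i ω) ∂μ = ∫⁻ x in Set.Ioi (1-η), gE x ∂ν := by
              rw [← hlaw i, setLIntegral_map measurableSet_Ioi gE_measurable (hmeas i)]
            rw [heq]
            exact hη.le
          · calc ∫⁻ ω in Eᶜ ∩ Pᶜ, gE (X i ω) ∂μ
                ≤ ∫⁻ _ω in Eᶜ ∩ Pᶜ, K ∂μ := by
                  refine setLIntegral_mono measurable_const fun ω hω => ?_
                  refine hgK _ ?_
                  have : ¬ (1 - η < X i ω) := hω.2
                  linarith [not_lt.mp this]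
              _ = K * μ (Eᶜ ∩ Pᶜ) := setLIntegral_const _ _
              _ ≤ (K+1) * δ' := by
                refine mul_le_mul' le_self_add ?_
                exact le_trans (measure_mono Set.inter_subset_left) hcheb
              _ = ENNReal.ofReal (ε/2) := by
                rw [hδ'def]
                exact ENNReal.mul_div_cancel' (by simp) (by simp [hK, lt_top_iff_ne_top])
      _ = ENNReal.ofReal ε := by
          rw [← ENNReal.ofReal_add (by linarith) (by linarith)]
          norm_num
  -- Jensen on Eᶜ
  have h₂ : ∫⁻ ω in Eᶜ, gE (A ω) ∂μ ≤ ENNReal.ofReal ε := by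
    have hmE0 : (m : ℝ≥0∞) ≠ 0 := Nat.cast_ne_zero.mpr (by omega)
    have hmET : (m : ℝ≥0∞) ≠ ⊤ := ENNReal.natCast_ne_top m
    have hptwise : ∀ᵐ ω ∂(μ.restrict Eᶜ),
        gE (A ω) ≤ (∑ i ∈ Finset.range m, gE (X i ω)) / m :=
      ae_restrict_of_ae (hGood.mono fun ω hω =>
        gE_jensen m hm1 (fun i => X i ω) (fun i _ => hω i))
    calc ∫⁻ ω in Eᶜ, gE (A ω) ∂μ
        ≤ ∫⁻ ω in Eᶜ, (∑ i ∈ Finset.range m, gE (X i ω)) / m ∂μ :=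
          lintegral_mono_ae hptwise
      _ = (∫⁻ ω in Eᶜ, ∑ i ∈ Finset.range m, gE (X i ω) ∂μ) / m := by
          simp_rw [div_eq_mul_inv]
          exact lintegral_mul_const' _ _ (by simp [hmE0])
      _ = (∑ i ∈ Finset.range m, ∫⁻ ω in Eᶜ, gE (X i ω) ∂μ) / m := by
          rw [lintegral_finset_sum' (f := fun i ω => gE (X i ω)) _
            (fun i _ => (gE_measurable.comp (hmeas i)).aemeasurable)]
      _ ≤ (∑ _i ∈ Finset.range m, ENNReal.ofReal ε) / m := by
          gcongr with i hi
          exact hI i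
      _ = ((m : ℝ≥0∞) * ENNReal.ofReal ε) / m := by
          rw [Finset.sum_const]; simp [nsmul_eq_mul]
      _ = ENNReal.ofReal ε := by
          rw [mul_comm, mul_div_assoc, ENNReal.div_self hmE0 hmET, mul_one]
  -- put everything together
  have hsplit : meanRatioInt μ X m
      = (∫⁻ ω in E, gE (A ω) ∂μ) + ∫⁻ ω in Eᶜ, gE (A ω) ∂μ := by
    rw [lintegral_add_compl (fun ω => gE (A ω)) hE]
    rfl
  rw [hsplit]
  calc (∫⁻ ω in E, gE (A ω) ∂μ) + ∫⁻ ω in Eᶜ, gE (A ω) ∂μ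
      ≤ ENNReal.ofReal (t/(1-t)) + ENNReal.ofReal ε := add_le_add h₁ h₂
    _ = ENNReal.ofReal (t/(1-t) + ε) := (ENNReal.ofReal_add htt0 hε0.le).symm
    _ < 1 := ENNReal.ofReal_lt_one.mpr hlt1
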